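/- Let n ≥ 1, a ∈ (0,∞], and let F be admissible on [0,a) with lim_{r→0+} F(r) > -∞. Let a' ∈ (0,a) and let ψ = a'·1_{B(0,1)} be a' times the indicator function of the open unit ball in ℝⁿ. Then the heat evolution e^{Δ}ψ at time t = 1 is not F-concave in ℝⁿ; that is, there exist y, z ∈ ℝⁿ and τ ∈ (0,1) such that F((e^{Δ}ψ)((1-τ)y+τz)) < (1-τ)·F((e^{Δ}ψ)(y)) + τ·F((e^{Δ}ψ)(z)). -/

import Mathlib

open MeasureTheory Real Set Filter

noncomputable section

abbrev Euc (n : ℕ) := EuclideanSpace ℝ (Fin n)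

noncomputable def heatFlow (n : ℕ) (t : ℝ) (φ : Euc n → ℝ) (x : Euc n) : ℝ :=
  (4 * Real.pi * t) ^ (-(n : ℝ) / 2) * ∫ y, Real.exp (-‖x - y‖ ^ 2 / (4 * t)) * φ y

/-- `f` is `F`-concave on `Ω` (extended-real valued inequality). -/
def FConcaveOn {V : Type*} [AddCommGroup V] [Module ℝ V]
    (Ω : Set V) (F : ℝ → EReal) (f : V → ℝ) : Prop :=
  ∀ x ∈ Ω, ∀ y ∈ Ω, ∀ τ : ℝ, τ ∈ Set.Ioo (0:ℝ) 1 →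
    ((1 - τ : ℝ) : EReal) * F (f x) + ((τ : ℝ) : EReal) * F (f y)
      ≤ F (f ((1 - τ) • x + τ • y))

/-- `F` is admissible on `[0, a)`. -/
def Admissible (a : EReal) (F : ℝ → EReal) : Prop :=
  0 < a ∧ F 0 = ⊥ ∧
  ContinuousOn F {r : ℝ | 0 < r ∧ (r : EReal) < a} ∧
  (∀ r : ℝ, 0 < r → (r : EReal) < a → F r ≠ ⊥ ∧ F r ≠ ⊤) ∧
  StrictMonoOn F {r : ℝ | 0 ≤ r ∧ (r : EReal) < a}

/-- extended-real logarithm with `log 0 = -∞`. -/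
noncomputable def elog (r : ℝ) : EReal := if 0 < r then (Real.log r : EReal) else ⊥

noncomputable def Efun (s : ℝ) : ℝ :=
  (4 * Real.pi) ^ (-(1:ℝ) / 2) * ∫ s' in Set.Ioi (0:ℝ), Real.exp (-(s - s') ^ 2 / 4)

noncomputable def Hfun : ℝ → ℝ := Function.invFun Efun

noncomputable def Ha (a : EReal) (r : ℝ) : EReal :=
  if 0 < r then
    (if a = ⊤ then (Real.log r : EReal) else (Hfun (r / a.toReal) : EReal))
  else ⊥

lemma gauss_integrable (n : ℕ) (x : Euc n) :
    Integrable (fun y : Euc n => Real.exp (-‖x - y‖ ^ 2 / 4)) := by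
  have h0 : Integrable (fun v : Euc n => Real.exp (-(4⁻¹ : ℝ) * ‖v‖ ^ 2)) := by
    have hc := (GaussianFourier.integrable_cexp_neg_mul_sq_norm_add (V := Euc n)
      (b := (4⁻¹ : ℂ)) (by norm_num) 0 0).re
    refine hc.congr (Filter.Eventually.of_forall fun v => ?_)
    simp only [zero_mul, add_zero]
    rw [show (-(4⁻¹:ℂ) * (‖v‖:ℂ) ^ 2) = ((-(4⁻¹ * ‖v‖ ^ 2) : ℝ) : ℂ) by push_cast; ring]
    rw [RCLike.re_to_complex, Complex.exp_ofReal_re]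
    ring_nf
  have heq : (fun y : Euc n => Real.exp (-‖x - y‖ ^ 2 / 4))
      = fun v : Euc n => Real.exp (-(4⁻¹ : ℝ) * ‖x - v‖ ^ 2) := by
    funext v; congr 1; ring
  rw [heq]
  exact h0.comp_sub_left x

lemma gauss_integral (n : ℕ) (x : Euc n) :
    ∫ y : Euc n, Real.exp (-‖x - y‖ ^ 2 / 4) = (4 * π) ^ ((n : ℝ) / 2) := by
  have h1 : (fun y : Euc n => Real.exp (-‖x - y‖ ^ 2 / 4))
      = fun y : Euc n => Real.exp (-(4⁻¹ : ℝ) * ‖x - y‖ ^ 2) := by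
    funext y; congr 1; ring
  rw [h1, integral_sub_left_eq_self (fun v : Euc n => Real.exp (-(4⁻¹ : ℝ) * ‖v‖ ^ 2)) volume x,
    GaussianFourier.integral_rexp_neg_mul_sq_norm (by norm_num : (0:ℝ) < 4⁻¹)]
  rw [finrank_euclideanSpace_fin]
  congr 1
  ring

set_option maxHeartbeats 1000000 in
/-- If `F` is admissible on `[0,a)` with `lim_{r→0+} F(r) > -∞`, then the heat
evolution at time `1` of `ψ = a'·1_{B(0,1)}` (with `a' ∈ (0,a)`) is not `F`-concave in `ℝⁿ`. -/
theorem stmt0 (n : ℕ) (hn : 1 ≤ n) (a : EReal) (F : ℝ → EReal)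
    (hF : Admissible a F)
    (hlim : ∃ b : ℝ, ∀ r : ℝ, 0 < r → (r : EReal) < a → (b : EReal) ≤ F r)
    (a' : ℝ) (ha'0 : 0 < a') (ha'a : (a' : EReal) < a)
    (ψ : Euc n → ℝ) (hψ : ψ = (Metric.ball (0 : Euc n) 1).indicator fun _ => a') :
    ∃ y z : Euc n, ∃ τ : ℝ, τ ∈ Set.Ioo (0:ℝ) 1 ∧
      F (heatFlow n 1 ψ ((1 - τ) • y + τ • z)) <
        ((1 - τ : ℝ) : EReal) * F (heatFlow n 1 ψ y)
          + ((τ : ℝ) : EReal) * F (heatFlow n 1 ψ z) := by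
  classical
  obtain ⟨ha0, hF0, hcont, hfin, hmono⟩ := hF
  obtain ⟨b, hb⟩ := hlim
  set B : Set (Euc n) := Metric.ball (0 : Euc n) 1 with hBdef
  have hBmeas : MeasurableSet B := measurableSet_ball
  have hvolpos : 0 < (volume B).toReal := by
    refine ENNReal.toReal_pos (ne_of_gt ?_) (ne_of_lt measure_ball_lt_top)
    exact Metric.measure_ball_pos _ _ one_pos
  -- the set integral
  set I : Euc n → ℝ := fun x => ∫ y in B, Real.exp (-‖x - y‖ ^ 2 / 4) with hIdef
  have hIntOn : ∀ x : Euc n, IntegrableOn (fun y => Real.exp (-‖x - y‖ ^ 2 / 4)) B volume :=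
    fun x => (gauss_integrable n x).integrableOn
  -- representation of the heat flow
  have hrepr : ∀ x : Euc n, heatFlow n 1 ψ x
      = (4 * π) ^ (-(n : ℝ) / 2) * (I x * a') := by
    intro x
    have e1 : ∀ y : Euc n, Real.exp (-‖x - y‖ ^ 2 / 4) * ψ y
        = B.indicator (fun y => Real.exp (-‖x - y‖ ^ 2 / 4) * a') y := by
      intro y
      rw [hψ]
      by_cases hy : y ∈ B
      · simp [Set.indicator_of_mem hy]
      · simp [Set.indicator_of_notMem hy]
    simp only [heatFlow, mul_one]
    rw [show (∫ y, Real.exp (-‖x - y‖ ^ 2 / 4) * ψ y)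
        = ∫ y, B.indicator (fun y => Real.exp (-‖x - y‖ ^ 2 / 4) * a') y from
      integral_congr_ae (Filter.Eventually.of_forall e1)]
    rw [integral_indicator hBmeas, integral_mul_const]
  -- positivity
  have hIpos : ∀ x : Euc n, 0 < I x := by
    intro x
    have hlb : ∀ y ∈ B, Real.exp (-(‖x‖ + 1) ^ 2 / 4) ≤ Real.exp (-‖x - y‖ ^ 2 / 4) := by
      intro y hy
      have hy1 : ‖y‖ < 1 := mem_ball_zero_iff.1 hy
      have h2 : ‖x - y‖ ≤ ‖x‖ + 1 := by
        calc ‖x - y‖ ≤ ‖x‖ + ‖y‖ := norm_sub_le x y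
        _ ≤ ‖x‖ + 1 := by linarith
      have h3 : ‖x - y‖ ^ 2 ≤ (‖x‖ + 1) ^ 2 := by nlinarith [norm_nonneg (x - y)]
      apply Real.exp_le_exp.2
      nlinarith
    have := setIntegral_mono_on
      (integrableOn_const measure_ball_lt_top.ne)
      (hIntOn x) hBmeas hlb
    rw [setIntegral_const, smul_eq_mul] at this
    calc (0:ℝ) < (volume B).toReal * Real.exp (-(‖x‖ + 1) ^ 2 / 4) := by positivity
    _ ≤ I x := this
  -- upper bound by the full Gaussian integral
  have hIub : ∀ x : Euc n, I x ≤ (4 * π) ^ ((n : ℝ) / 2) := by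
    intro x
    have h1 := setIntegral_le_integral (μ := volume) (s := B) (gauss_integrable n x)
      (Filter.Eventually.of_forall fun y => (Real.exp_pos _).le)
    rw [gauss_integral n x] at h1
    exact h1
  -- the point z at distance 3
  have hnpos : 0 < n := hn
  set e : Euc n := EuclideanSpace.single (⟨0, hnpos⟩ : Fin n) (1:ℝ) with hedef
  have he : ‖e‖ = 1 := by rw [hedef, EuclideanSpace.norm_single]; simp
  set z : Euc n := (3:ℝ) • e with hzdef
  have hz : ‖z‖ = 3 := by
    rw [hzdef, norm_smul, he, mul_one, Real.norm_eq_abs]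
    norm_num
  -- I z < I 0
  have hI0lb : (volume B).toReal * Real.exp (-(4:ℝ)⁻¹) ≤ I 0 := by
    have hlb : ∀ y ∈ B, Real.exp (-(4:ℝ)⁻¹) ≤ Real.exp (-‖(0:Euc n) - y‖ ^ 2 / 4) := by
      intro y hy
      have hy1 : ‖y‖ < 1 := mem_ball_zero_iff.1 hy
      have h0 : ‖(0:Euc n) - y‖ = ‖y‖ := by rw [zero_sub, norm_neg]
      apply Real.exp_le_exp.2
      rw [h0]
      nlinarith [norm_nonneg y]
    have := setIntegral_mono_on
      (integrableOn_const measure_ball_lt_top.ne)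
      (hIntOn 0) hBmeas hlb
    rw [setIntegral_const, smul_eq_mul] at this
    exact this
  have hIzub : I z ≤ (volume B).toReal * Real.exp (-1:ℝ) := by
    have hub : ∀ y ∈ B, Real.exp (-‖z - y‖ ^ 2 / 4) ≤ Real.exp (-1:ℝ) := by
      intro y hy
      have hy1 : ‖y‖ < 1 := mem_ball_zero_iff.1 hy
      have h2 : (2:ℝ) ≤ ‖z - y‖ := by
        have := norm_sub_norm_le z y
        rw [hz] at this
        linarith [abs_le.1 (le_refl |‖z‖ - ‖y‖|)]
      have h3 : (4:ℝ) ≤ ‖z - y‖ ^ 2 := by nlinarith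
      apply Real.exp_le_exp.2
      nlinarith
    have := setIntegral_mono_on (hIntOn z)
      (integrableOn_const measure_ball_lt_top.ne) hBmeas hub
    rw [setIntegral_const, smul_eq_mul] at this
    exact this
  have hIzlt : I z < I 0 := by
    have hmid : (volume B).toReal * Real.exp (-1:ℝ)
        < (volume B).toReal * Real.exp (-(4:ℝ)⁻¹) := by
      have : Real.exp (-1:ℝ) < Real.exp (-(4:ℝ)⁻¹) := Real.exp_lt_exp.2 (by norm_num)
      exact mul_lt_mul_of_pos_left this hvolpos
    linarith
  -- heat flow values
  have hCpos : (0:ℝ) < (4 * π) ^ (-(n : ℝ) / 2) :=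
    Real.rpow_pos_of_pos (by positivity) _
  have hupos : ∀ x : Euc n, 0 < heatFlow n 1 ψ x := by
    intro x
    rw [hrepr x]
    have := hIpos x
    positivity
  have huub : ∀ x : Euc n, heatFlow n 1 ψ x ≤ a' := by
    intro x
    rw [hrepr x]
    have hCmul : (4 * π) ^ (-(n : ℝ) / 2) * (4 * π) ^ ((n : ℝ) / 2) = 1 := by
      rw [← Real.rpow_add (by positivity), show (-(n:ℝ) / 2 + (n:ℝ) / 2) = 0 by ring,
        Real.rpow_zero]
    calc (4 * π) ^ (-(n : ℝ) / 2) * (I x * a')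
        ≤ (4 * π) ^ (-(n : ℝ) / 2) * ((4 * π) ^ ((n : ℝ) / 2) * a') :=
          mul_le_mul_of_nonneg_left
            (mul_le_mul_of_nonneg_right (hIub x) ha'0.le) hCpos.le
    _ = a' := by rw [← mul_assoc, hCmul, one_mul]
  have hulta : ∀ x : Euc n, ((heatFlow n 1 ψ x : ℝ) : EReal) < a := fun x =>
    lt_of_le_of_lt (EReal.coe_le_coe_iff.2 (huub x)) ha'a
  have hmem : ∀ x : Euc n, heatFlow n 1 ψ x ∈ {r : ℝ | 0 ≤ r ∧ (r : EReal) < a} :=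
    fun x => ⟨(hupos x).le, hulta x⟩
  -- u z < u 0
  have huzlt : heatFlow n 1 ψ z < heatFlow n 1 ψ 0 := by
    rw [hrepr z, hrepr 0]
    exact mul_lt_mul_of_pos_left (mul_lt_mul_of_pos_right hIzlt ha'0) hCpos
  have hFlt : F (heatFlow n 1 ψ z) < F (heatFlow n 1 ψ 0) := hmono (hmem z) (hmem 0) huzlt
  -- real values of F
  have hfinu : ∀ x : Euc n, F (heatFlow n 1 ψ x) ≠ ⊥ ∧ F (heatFlow n 1 ψ x) ≠ ⊤ :=
    fun x => hfin _ (hupos x) (hulta x)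
  set M : ℝ := (F (heatFlow n 1 ψ 0)).toReal with hMdef
  set m : ℝ := (F (heatFlow n 1 ψ z)).toReal with hmdef
  have hM : ((M : ℝ) : EReal) = F (heatFlow n 1 ψ 0) :=
    EReal.coe_toReal (hfinu 0).2 (hfinu 0).1
  have hm : ((m : ℝ) : EReal) = F (heatFlow n 1 ψ z) :=
    EReal.coe_toReal (hfinu z).2 (hfinu z).1
  have hmM : m < M := by
    rw [← hM, ← hm] at hFlt
    exact_mod_cast hFlt
  have hbm : b ≤ m := by
    have := hb _ (hupos z) (hulta z)
    rw [← hm] at this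
    exact_mod_cast this
  have hMb : 0 < M - b := by linarith
  set τ : ℝ := (M - m) / (2 * (M - b)) with hτdef
  have hτpos : 0 < τ := div_pos (by linarith) (by linarith)
  have hτlt1 : τ < 1 := by
    have h2 : (0:ℝ) < 2 * (M - b) := by linarith
    rw [hτdef, div_lt_one h2]
    linarith
  set w : Euc n := τ⁻¹ • z with hwdef
  have hcomb : (1 - τ) • (0 : Euc n) + τ • w = z := by
    rw [hwdef, smul_zero, zero_add, smul_smul, mul_inv_cancel₀ (ne_of_gt hτpos), one_smul]
  refine ⟨0, w, τ, ⟨hτpos, hτlt1⟩, ?_⟩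
  rw [hcomb]
  set k : ℝ := (F (heatFlow n 1 ψ w)).toReal with hkdef
  have hk : ((k : ℝ) : EReal) = F (heatFlow n 1 ψ w) :=
    EReal.coe_toReal (hfinu w).2 (hfinu w).1
  have hbk : b ≤ k := by
    have := hb _ (hupos w) (hulta w)
    rw [← hk] at this
    exact_mod_cast this
  rw [← hm, ← hM, ← hk, ← EReal.coe_mul, ← EReal.coe_mul, ← EReal.coe_add]
  have hreal : m < (1 - τ) * M + τ * k := by
    have hτMb : τ * (M - b) = (M - m) / 2 := by
      rw [hτdef]
      field_simp
    have h2 : τ * b ≤ τ * k := mul_le_mul_of_nonneg_left hbk hτpos.le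
    nlinarith
  exact_mod_cast hreal
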